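/- For every m ∈ ℕ, the Margolis homology of the dual Steenrod algebra with respect to Q_m vanishes: LinearMap.ker Q_m = LinearMap.range Q_m as F₂-submodules of A; equivalently, every x ∈ A with Q_m(x) = 0 equals Q_m(y) for some y ∈ A. (Lemma 2.15 of the paper: H(A_*; Q_m) ≅ 0 for all m ≥ 0, i.e. the Margolis homology of HF₂ vanishes.) -/
import Mathlib


/-!
Let `F₂ := ZMod 2` and `A := MvPolynomial {i : ℕ // 1 ≤ i} F₂`, modeling the mod 2 dual
Steenrod algebra, with Milnor primitives `Q m` as below.

STATEMENT (Lemma 2.15): for every `m`, the Margolis homology of the dual Steenrod algebra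
with respect to `Q_m` vanishes: `ker Q_m = range Q_m` as `F₂`-submodules of `A`.
-/

open MvPolynomial

abbrev F₂ : Type := ZMod 2

/-- The mod 2 dual Steenrod algebra, modeled as a polynomial algebra on `ξ_i`, `i ≥ 1`. -/
abbrev A : Type := MvPolynomial {i : ℕ // 1 ≤ i} F₂

/-- The generators `ξ_k`, with the convention `ξ_0 = 1`. -/
noncomputable def ξ (k : ℕ) : A :=
  if h : 1 ≤ k then X (⟨k, h⟩ : {i : ℕ // 1 ≤ i}) else 1

/-- The Milnor primitive `Q_m`, as the unique `F₂`-derivation of `A` with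
`Q_m (ξ_k) = ξ_{k-m-1} ^ (2 ^ (m+1))` for `k ≥ m + 1` and `Q_m (ξ_k) = 0` for `1 ≤ k ≤ m`. -/
noncomputable def Q (m : ℕ) : Derivation F₂ A A :=
  MvPolynomial.mkDerivation F₂ fun i : {i : ℕ // 1 ≤ i} =>
    if m + 1 ≤ i.1 then ξ (i.1 - (m + 1)) ^ 2 ^ (m + 1) else 0

lemma two_eq_zero_A : (2 : A) = 0 := by
  have := CharP.cast_eq_zero A 2
  simpa using this

lemma Q_X (m : ℕ) (i : {i : ℕ // 1 ≤ i}) :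
    Q m (X i) = if m + 1 ≤ i.1 then ξ (i.1 - (m + 1)) ^ 2 ^ (m + 1) else 0 :=
  mkDerivation_X _ _ _

lemma Q_Q_X (m : ℕ) (i : {i : ℕ // 1 ≤ i}) : Q m (Q m (X i)) = 0 := by
  rw [Q_X]
  split
  · rw [Derivation.leibniz_pow]
    have h2 : ((2 ^ (m + 1) : ℕ) : A) = 0 := by
      push_cast
      rw [two_eq_zero_A, zero_pow (Nat.succ_ne_zero m)]
    rw [← Nat.cast_smul_eq_nsmul A]; rw [h2, zero_smul]
  · exact map_zero _

/-- `Q m ∘ Q m` is again a derivation, since we are in characteristic 2. -/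
noncomputable def QQ (m : ℕ) : Derivation F₂ A A where
  toLinearMap := (Q m).toLinearMap ∘ₗ (Q m).toLinearMap
  map_one_eq_zero' := by simp
  leibniz' a b := by
    show Q m (Q m (a * b)) = a • (Q m (Q m b)) + b • (Q m (Q m a))
    rw [Derivation.leibniz]
    simp only [smul_eq_mul]
    rw [map_add, Derivation.leibniz, Derivation.leibniz]
    simp only [smul_eq_mul]
    have h : (2 : A) * ((Q m) a * (Q m) b) = 0 := by rw [two_eq_zero_A, zero_mul]
    linear_combination h

lemma QQ_eq_zero (m : ℕ) : QQ m = 0 := by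
  apply MvPolynomial.derivation_ext
  intro i
  show Q m (Q m (X i)) = 0
  exact Q_Q_X m i

lemma Q_Q_eq_zero (m : ℕ) (x : A) : Q m (Q m x) = 0 := by
  have := congrArg (fun D : Derivation F₂ A A => D x) (QQ_eq_zero m)
  simpa [QQ] using this

lemma Q_xi_succ (m : ℕ) : Q m (ξ (m + 1)) = 1 := by
  rw [ξ, dif_pos (Nat.le_add_left 1 m), Q_X]
  simp [ξ]

/-- The Margolis homology of the dual Steenrod algebra vanishes:
`ker Q_m = range Q_m` for every `m ≥ 0`. -/
theorem margolisHomology_dualSteenrod_vanishes (m : ℕ) :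
    LinearMap.ker (Q m).toLinearMap = LinearMap.range (Q m).toLinearMap := by
  ext x
  simp only [LinearMap.mem_ker, LinearMap.mem_range]
  constructor
  · intro hx
    have hx' : Q m x = 0 := hx
    refine ⟨ξ (m + 1) * x, ?_⟩
    show Q m (ξ (m + 1) * x) = x
    rw [Derivation.leibniz]
    show ξ (m+1) * Q m x + x * Q m (ξ (m+1)) = x
    rw [hx', Q_xi_succ, mul_zero, mul_one, zero_add]
  · rintro ⟨y, rfl⟩
    exact Q_Q_eq_zero m y
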